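/- Fix p̄ > 0 and Γ ≥ 0. There exists λ_Γ(p̄) > 0, depending only on Γ, p̄, N, and y, such that whenever q lies in the probability simplex of ℝ^r with q_a ≥ p̄ for all a, and 0 < λ < λ_Γ(p̄), the unique minimizer g of Φ_{q,λ} satisfies min_{a} y_a·g_a > Γ. -/

import Mathlib

open Matrix Set

/-- Logistic loss `ℓ(u) = log(1 + e^{−u})`. -/
noncomputable def logLoss (u : ℝ) : ℝ := Real.log (1 + Real.exp (-u))

/-- Finite-template objective
`Φ_{q,λ}(g) = ∑ₐ q_a·ℓ(y_a·g_a) + (λ/2)·gᵀ N⁻¹ g`. -/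
noncomputable def templateObj {r : ℕ} (N : Matrix (Fin r) (Fin r) ℝ)
    (y q : Fin r → ℝ) (lam : ℝ) (g : Fin r → ℝ) : ℝ :=
  ∑ a, q a * logLoss (y a * g a) + (lam / 2) * (g ⬝ᵥ (N⁻¹ *ᵥ g))

lemma logLoss_nonneg (u : ℝ) : 0 ≤ logLoss u :=
  Real.log_nonneg (by nlinarith [Real.exp_pos (-u)])

lemma logLoss_pos (u : ℝ) : 0 < logLoss u :=
  Real.log_pos (by nlinarith [Real.exp_pos (-u)])

lemma logLoss_anti {u v : ℝ} (h : u ≤ v) : logLoss v ≤ logLoss u := by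
  apply Real.log_le_log (by positivity)
  have := Real.exp_le_exp.mpr (neg_le_neg h)
  linarith

lemma logLoss_le_exp (u : ℝ) : logLoss u ≤ Real.exp (-u) := by
  have h := Real.log_le_sub_one_of_pos (x := 1 + Real.exp (-u)) (by positivity)
  simpa [logLoss] using h

/-- Small-ridge template margin: for every `p̄ > 0` and `Γ ≥ 0` there is
`λ_Γ(p̄) > 0` (depending only on `Γ, p̄, N, y`) such that whenever `q` is in the
probability simplex with `q_a ≥ p̄` for all `a` and `0 < λ < λ_Γ(p̄)`, the unique
minimizer `g` of `Φ_{q,λ}` satisfies `min_a y_a·g_a > Γ`. -/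
theorem template_margin
    {r : ℕ} (hr : 0 < r)
    (N : Matrix (Fin r) (Fin r) ℝ) (hN : N.PosDef)
    (y : Fin r → ℝ) (hy : ∀ a, y a = 1 ∨ y a = -1)
    (pbar : ℝ) (hpbar : 0 < pbar) (Γ : ℝ) (hΓ : 0 ≤ Γ) :
    ∃ lamΓ : ℝ, 0 < lamΓ ∧
      ∀ q : Fin r → ℝ, (∀ a, 0 ≤ q a) → (∑ a, q a) = 1 → (∀ a, pbar ≤ q a) →
        ∀ lam : ℝ, 0 < lam → lam < lamΓ →
          ∀ g : Fin r → ℝ, IsMinOn (templateObj N y q lam) univ g →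
            ∀ a, Γ < y a * g a := by
  have hNi : (N⁻¹).PosDef := hN.inv
  have hy0 : y ≠ 0 := by
    intro h
    have := hy ⟨0, hr⟩
    rw [h] at this
    norm_num at this
  set C : ℝ := y ⬝ᵥ (N⁻¹ *ᵥ y) with hC
  have hCpos : 0 < C := by
    have := hNi.dotProduct_mulVec_pos hy0
    simpa [star_trivial] using this
  set ε : ℝ := pbar * logLoss Γ / 2 with hε
  have hεpos : 0 < ε := by
    have := logLoss_pos Γ
    positivity
  set T : ℝ := 1 + |Real.log ε| with hT
  have hTpos : 0 < T := by
    have := abs_nonneg (Real.log ε)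
    linarith
  have hexpT : Real.exp (-T) < ε := by
    have h1 : -T < Real.log ε := by
      have := neg_abs_le (Real.log ε)
      linarith
    calc Real.exp (-T) < Real.exp (Real.log ε) := Real.exp_lt_exp.mpr h1
      _ = ε := Real.exp_log hεpos
  clear_value C ε T
  refine ⟨2 * ε / (T ^ 2 * C), by positivity, ?_⟩
  intro q hq0 hq1 hqp lam hlam hlamlt g hmin a
  -- evaluate at h := T • y
  have key := isMinOn_iff.mp hmin (fun b => T * y b) (mem_univ _)
  have hy2 : ∀ b, y b * y b = 1 := by
    intro b; rcases hy b with h | h <;> rw [h] <;> norm_num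
  have hΦh : templateObj N y q lam (fun b => T * y b)
      = logLoss T + (lam / 2) * (T ^ 2 * C) := by
    unfold templateObj
    have h1 : ∑ b, q b * logLoss (y b * (T * y b)) = logLoss T := by
      calc ∑ b, q b * logLoss (y b * (T * y b))
          = ∑ b, q b * logLoss T := by
            apply Finset.sum_congr rfl
            intro b _
            congr 2
            have h3 : y b * (T * y b) = y b * y b * T := by ring
            rw [h3, hy2 b, one_mul]
        _ = logLoss T := by rw [← Finset.sum_mul, hq1, one_mul]
    have h2 : (fun b => T * y b) ⬝ᵥ N⁻¹ *ᵥ (fun b => T * y b) = T ^ 2 * C := by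
      have he : (fun b => T * y b) = T • y := by
        funext b; simp [Pi.smul_apply, smul_eq_mul]
      rw [he, mulVec_smul, dotProduct_smul, smul_dotProduct, smul_eq_mul, smul_eq_mul,
        ← hC]
      ring
    rw [h1, h2]
  have hquad : 0 ≤ g ⬝ᵥ (N⁻¹ *ᵥ g) := by
    have := hNi.posSemidef.dotProduct_mulVec_nonneg g
    simpa [star_trivial] using this
  have hsum : pbar * logLoss (y a * g a) ≤ ∑ b, q b * logLoss (y b * g b) := by
    calc pbar * logLoss (y a * g a) ≤ q a * logLoss (y a * g a) :=
          mul_le_mul_of_nonneg_right (hqp a) (logLoss_nonneg _)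
      _ ≤ ∑ b, q b * logLoss (y b * g b) := by
          apply Finset.single_le_sum (f := fun b => q b * logLoss (y b * g b))
            (fun b _ => mul_nonneg (hq0 b) (logLoss_nonneg _)) (Finset.mem_univ a)
  have hΦg : ∑ b, q b * logLoss (y b * g b) ≤ templateObj N y q lam g := by
    unfold templateObj
    nlinarith [hquad, hlam.le]
  have hridge : (lam / 2) * (T ^ 2 * C) < ε := by
    have h2 : lam * (T ^ 2 * C) < 2 * ε :=
      (lt_div_iff₀ (by positivity : (0:ℝ) < T ^ 2 * C)).mp hlamlt
    have h3 : lam / 2 * (T ^ 2 * C) = lam * (T ^ 2 * C) / 2 := by ring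
    linarith
  have hchain : pbar * logLoss (y a * g a) < pbar * logLoss Γ := by
    have h1 := logLoss_le_exp T
    calc pbar * logLoss (y a * g a) ≤ templateObj N y q lam g := le_trans hsum hΦg
      _ ≤ logLoss T + (lam / 2) * (T ^ 2 * C) := by rw [← hΦh]; exact key
      _ < ε + ε := by linarith [hexpT]
      _ = pbar * logLoss Γ := by rw [hε]; ring
  have hll : logLoss (y a * g a) < logLoss Γ := by
    exact lt_of_mul_lt_mul_left hchain hpbar.le
  by_contra hcon
  push_neg at hcon
  exact absurd (logLoss_anti hcon) (not_le.mpr hll)
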